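/- Let α > 0 and define γ : ℝ → ℝ⁴₁ by γ(s) = (0, s, αs² + α − 1/(4α), αs² + α + 1/(4α)). Then γ is a unit-speed curve on the hyperboloid H³ (i.e., ⟨γ,γ⟩ = −1 and ⟨γ',γ'⟩ = 1 in the Lorentz metric), and γ satisfies γ'' − γ = V(γ) ×_{H³} γ' where V(p) = a + ⟨a,p⟩p with a = (1,0,0,0). Moreover ⟨γ''−γ, γ''−γ⟩ = 1, so γ has constant curvature 1. -/

import Mathlib

def ldot (u v : Fin 4 → ℝ) : ℝ := u 0 * v 0 + u 1 * v 1 + u 2 * v 2 - u 3 * v 3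

def det4 (u v w p : Fin 4 → ℝ) : ℝ := (Matrix.of ![u, v, w, p]).det

/-- The explicit curve `γ(s) = (0, s, αs² + α - 1/(4α), αs² + α + 1/(4α))` is a
unit-speed curve on `H³` and a conformal trajectory (with `q = 1`) of
`V(p) = a + ⟨a,p⟩p`, `a = (1,0,0,0)`, with constant curvature `1`. -/
theorem stmt14 (α : ℝ) (hα : 0 < α) (a : Fin 4 → ℝ) (ha : a = ![1, 0, 0, 0])
    (γ g g' X : ℝ → (Fin 4 → ℝ))
    (hγ : γ = fun s => ![0, s, α * s ^ 2 + α - 1 / (4 * α),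
      α * s ^ 2 + α + 1 / (4 * α)])
    (hd1 : ∀ s, HasDerivAt γ (g s) s)
    (hd2 : ∀ s, HasDerivAt g (g' s) s)
    (hXt : ∀ s, ldot (X s) (γ s) = 0)
    (hX : ∀ s, ∀ w, ldot w (γ s) = 0 →
      ldot (X s) w = det4 (a + ldot a (γ s) • γ s) (g s) w (γ s)) :
    (∀ s, ldot (γ s) (γ s) = -1) ∧ (∀ s, 0 < γ s 3) ∧
    (∀ s, ldot (g s) (g s) = 1) ∧
    (∀ s, g' s - γ s = X s) ∧
    (∀ s, ldot (g' s - γ s) (g' s - γ s) = 1) := by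

  have hα' : α ≠ 0 := hα.ne'
  -- derivative of γ
  have hG : ∀ s, HasDerivAt γ (![0, 1, 2*α*s, 2*α*s]) s := by
    intro s
    rw [hγ, hasDerivAt_pi]
    intro i
    fin_cases i <;> simp
    · exact hasDerivAt_const s 0
    · exact hasDerivAt_id s
    · refine ((hasDerivAt_pow 2 s).const_mul α).congr_deriv ?_
      ring
    · refine ((hasDerivAt_pow 2 s).const_mul α).congr_deriv ?_
      ring
  have hg : ∀ s, g s = ![0, 1, 2*α*s, 2*α*s] := fun s => (hd1 s).unique (hG s)
  have hgfun : g = fun s => ![0, 1, 2*α*s, 2*α*s] := funext hg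
  have hG' : ∀ s, HasDerivAt g (![0, 0, 2*α, 2*α]) s := by
    intro s
    rw [hgfun, hasDerivAt_pi]
    intro i
    fin_cases i <;> simp
    · exact hasDerivAt_const s 0
    · exact hasDerivAt_const s 1
    · refine ((hasDerivAt_id s).const_mul (2*α)).congr_deriv ?_
      ring
    · refine ((hasDerivAt_id s).const_mul (2*α)).congr_deriv ?_
      ring
  have hg' : ∀ s, g' s = ![0, 0, 2*α, 2*α] := fun s => (hd2 s).unique (hG' s)
  refine ⟨?_, ?_, ?_, ?_, ?_⟩
  · intro s; simp [ldot, hγ]; field_simp; ring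
  · intro s; simp only [hγ]; show (0:ℝ) < α * s ^ 2 + α + 1 / (4 * α); positivity
  · intro s; simp [ldot, hg]
  · intro s
    set A := α * s ^ 2 + α - 1 / (4 * α) with hA
    set B := α * s ^ 2 + α + 1 / (4 * α) with hB
    have hγs : γ s = ![0, s, A, B] := by rw [hγ]
    have hE0 : X s 1 * s + X s 2 * A - X s 3 * B = 0 := by
      have h := hXt s
      simp [ldot, hγs] at h
      linarith
    have hE1 : X s 0 = 0 := by
      have h := hX s ![1,0,0,0] (by simp [ldot, hγs])
      simp [ldot, det4, hγs, hg, ha, Matrix.det_succ_row_zero, Fin.sum_univ_succ] at h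
      linarith
    have hE2 : X s 1 * B - X s 3 * s = -(2*α)*s := by
      have h := hX s ![0,B,0,s] (by simp [ldot, hγs]; ring)
      simp [ldot, det4, hγs, hg, ha, Matrix.det_succ_row_zero, Fin.sum_univ_succ] at h
      rw [h, hA, hB]; field_simp; ring
    have hE3 : X s 2 * B - X s 3 * A = 1 := by
      have h := hX s ![0,0,B,A] (by simp [ldot, hγs]; ring)
      simp [ldot, det4, hγs, hg, ha, Matrix.det_succ_row_zero, Fin.sum_univ_succ] at h
      rw [h, hA, hB]; field_simp; ring
    have hBB : B^2 - s^2 - A^2 = 1 := by rw [hA, hB]; field_simp; ring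
    have hB0 : B ≠ 0 := by have : (0:ℝ) < B := by rw [hB]; positivity
                           exact this.ne'
    have hf2 : 2*α*(B - A) = 1 := by rw [hA, hB]; field_simp; ring
    have hx3 : X s 3 = 2*α - B := by
      have key : X s 3 * (B^2 - s^2 - A^2) = -(2*α)*s*s + 1*A := by
        linear_combination (-B) * hE0 + s * hE2 + A * hE3
      rw [hBB] at key
      rw [hB]
      rw [hA] at key
      linarith
    have hx1 : X s 1 = -s := by
      have key : X s 1 * B = -s * B := by
        linear_combination hE2 + s * hx3
      exact mul_right_cancel₀ hB0 key
    have hx2 : X s 2 = 2*α - A := by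
      have key : X s 2 * B = (2*α - A) * B := by
        linear_combination hE3 + A * hx3 - hf2
      exact mul_right_cancel₀ hB0 key
    funext i
    fin_cases i <;>
      simp [hg', hγs, hE1, hx1, hx2, hx3]
  · intro s; simp [ldot, hg', hγ]; field_simp; ring
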